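/- Let T = (T_1, ..., T_d) be a commuting operator-valued multishift on ℓ²_H(N^d) with all operator weights equal to unitary operators on H, and suppose each T_j is a contraction. Then T satisfies von Neumann's inequality: ‖p(T)‖ ≤ sup_{z ∈ D^d} |p(z)| for all polynomials p in d variables. -/

import Mathlib

open scoped Pointwise


/-- The `j`-th standard unit multi-index in `ℕ^d`. -/
def unitIdx {d : ℕ} (j : Fin d) : Fin d → ℕ := fun i => if i = j then 1 else 0

/-- `T^α = T_1^{α_1} ⋯ T_d^{α_d}` for a (commuting) tuple in a possibly noncommutative ring. -/
noncomputable def tuplePow {d : ℕ} {R : Type*} [Monoid R] (T : Fin d → R) (α : Fin d →₀ ℕ) : R :=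
  (List.ofFn fun j => T j ^ α j).prod

/-- Evaluation `p(T) = Σ_α a_α T^α` of a polynomial on a tuple of operators. -/
noncomputable def polyEval {d : ℕ} {R : Type*} [Ring R] [Algebra ℂ R] (T : Fin d → R)
    (p : MvPolynomial (Fin d) ℂ) : R :=
  ∑ α ∈ p.support, MvPolynomial.coeff α p • tuplePow T α

/-- `sup_{z ∈ 𝔻^d} |p(z)|`, the supremum of `|p|` over the open unit polydisc. -/
noncomputable def polySup {d : ℕ} (p : MvPolynomial (Fin d) ℂ) : ℝ :=
  ⨆ z : {z : Fin d → ℂ // ∀ i, ‖z i‖ < 1}, ‖MvPolynomial.eval z.1 p‖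

instance {d : ℕ} (a b : Fin d → ℕ) : Decidable (a ≤ b) :=
  decidable_of_iff (∀ i, a i ≤ b i) Iff.rfl

namespace VNmulti

noncomputable def om (N : ℕ) : ℂ := Complex.exp (2 * Real.pi * Complex.I / N)

lemma om_ne_zero {N : ℕ} : om N ≠ 0 := Complex.exp_ne_zero _

lemma om_pow_N {N : ℕ} (hN : 0 < N) : om N ^ N = 1 := by
  have hNc : (N : ℂ) ≠ 0 := Nat.cast_ne_zero.mpr hN.ne'
  rw [om, ← Complex.exp_nat_mul]
  rw [show (N:ℂ) * (2 * Real.pi * Complex.I / N) = 2 * Real.pi * Complex.I by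
    field_simp]
  exact Complex.exp_two_pi_mul_I

lemma normSq_om {N : ℕ} : Complex.normSq (om N) = 1 := by
  have : ‖om N‖ = 1 := by
    rw [om]
    have : (2 * Real.pi * Complex.I / N) = ((2 * Real.pi / N : ℝ) : ℂ) * Complex.I := by
      push_cast; ring
    rw [this, Complex.norm_exp_ofReal_mul_I]
  rw [← Complex.sq_norm, this, one_pow]

lemma conj_om {N : ℕ} : (starRingEnd ℂ) (om N) = (om N)⁻¹ := by
  rw [om, ← Complex.exp_conj, ← Complex.exp_neg]
  congr 1
  simp [map_div₀, Complex.conj_I, map_ofNat]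
  ring

lemma om_zpow_eq_one {N : ℕ} (hN : 0 < N) {n : ℤ} (h : om N ^ n = 1) : (N:ℤ) ∣ n := by
  rw [om, ← Complex.exp_int_mul, Complex.exp_eq_one_iff] at h
  obtain ⟨k, hk⟩ := h
  have hNc : (N : ℂ) ≠ 0 := Nat.cast_ne_zero.mpr hN.ne'
  have hpi : (2 * (Real.pi:ℂ) * Complex.I) ≠ 0 := by
    simp [Real.pi_ne_zero, Complex.I_ne_zero, two_ne_zero]
  have h2 : (n : ℂ) = N * k := by
    have h3 : ((n:ℂ) - N * k) * (2 * (Real.pi:ℂ) * Complex.I) = 0 := by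
      field_simp at hk
      linear_combination (2 * (Real.pi:ℂ) * Complex.I) * hk
    rcases mul_eq_zero.mp h3 with h4 | h4
    · linear_combination h4
    · exact absurd h4 hpi
  exact ⟨k, by exact_mod_cast h2⟩

/-- 1-dim orthogonality of roots of unity. -/
lemma orth1 {N : ℕ} (hN : 0 < N) {a b : ℕ} (ha : a < N) (hb : b < N) :
    ∑ m ∈ Finset.range N, om N ^ (a * m) * (starRingEnd ℂ) (om N ^ (b * m))
      = if a = b then (N : ℂ) else 0 := by
  have hterm : ∀ m, om N ^ (a * m) * (starRingEnd ℂ) (om N ^ (b * m))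
      = (om N ^ a * (starRingEnd ℂ) (om N ^ b)) ^ m := by
    intro m
    rw [pow_mul, pow_mul, map_pow, mul_pow]
  simp_rw [hterm]
  set x : ℂ := om N ^ a * (starRingEnd ℂ) (om N ^ b) with hx
  by_cases hab : a = b
  · subst hab
    have : x = 1 := by
      rw [hx, mul_comm, ← Complex.normSq_eq_conj_mul_self, map_pow, normSq_om, one_pow]
      norm_num
    simp [this]
  · have hxN : x ^ N = 1 := by
      rw [hx, mul_pow, ← pow_mul, ← map_pow, ← pow_mul,
        mul_comm a N, mul_comm b N, pow_mul, pow_mul, om_pow_N hN, one_pow, one_pow, map_one, mul_one]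
    have hx1 : x ≠ 1 := by
      intro h1
      have hxz : x = om N ^ ((a:ℤ) - (b:ℤ)) := by
        rw [hx, map_pow, conj_om, zpow_sub₀ om_ne_zero]
        rw [zpow_natCast, zpow_natCast, inv_pow]
        ring
      have hdvd := om_zpow_eq_one hN (n := (a:ℤ) - b) (by rw [← hxz, h1])
      obtain ⟨k, hk⟩ := hdvd
      rcases lt_trichotomy k 0 with h | h | h
      · nlinarith [Int.lt_iff_add_one_le.mp h, (by exact_mod_cast ha : (a:ℤ) < N),
          (by positivity : (0:ℤ) ≤ (b:ℤ))]
      · rw [h, mul_zero] at hk; omega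
      · nlinarith [Int.lt_iff_add_one_le.mp h, (by exact_mod_cast hb : (b:ℤ) < N),
          (by positivity : (0:ℤ) ≤ (a:ℤ))]
    rw [geom_sum_eq hx1, hxN, sub_self, zero_div, if_neg hab]

lemma norm_om {N : ℕ} : ‖om N‖ = 1 := by
  have h2 : ‖om N‖ ^ 2 = 1 := by rw [Complex.sq_norm, normSq_om]
  nlinarith [norm_nonneg (om N)]
variable {d : ℕ}

noncomputable def ch (N : ℕ) (k δ : Fin d → ℕ) : ℂ := ∏ j, om N ^ (δ j * k j)

noncomputable abbrev kIdx (N d : ℕ) : Finset (Fin d → ℕ) :=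
  Fintype.piFinset fun _ : Fin d => Finset.range N

lemma ch_add (N : ℕ) (k α δ : Fin d → ℕ) : ch N k (α + δ) = ch N k α * ch N k δ := by
  rw [ch, ch, ch, ← Finset.prod_mul_distrib]
  refine Finset.prod_congr rfl fun j _ => ?_
  rw [Pi.add_apply, add_mul, pow_add]

lemma norm_ch (N : ℕ) (k δ : Fin d → ℕ) : ‖ch N k δ‖ = 1 := by
  rw [ch, norm_prod]
  refine Finset.prod_eq_one fun j _ => ?_
  rw [norm_pow]
  have h2 : ‖om N‖ ^ 2 = 1 := by rw [Complex.sq_norm, normSq_om]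
  have : ‖om N‖ = 1 := by
    nlinarith [norm_nonneg (om N)]
  rw [this, one_pow]

lemma orthd {N : ℕ} (hN : 0 < N) {δ δ' : Fin d → ℕ} (hδ : ∀ j, δ j < N)
    (hδ' : ∀ j, δ' j < N) :
    ∑ k ∈ kIdx N d, ch N k δ * (starRingEnd ℂ) (ch N k δ')
      = if δ = δ' then ((N : ℂ)) ^ d else 0 := by
  have hterm : ∀ k, ch N k δ * (starRingEnd ℂ) (ch N k δ')
      = ∏ j, (om N ^ (δ j * k j) * (starRingEnd ℂ) (om N ^ (δ' j * k j))) := by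
    intro k
    rw [ch, ch, map_prod, ← Finset.prod_mul_distrib]
  simp_rw [hterm]
  rw [← Finset.prod_univ_sum (fun _ : Fin d => Finset.range N)
    (fun j m => om N ^ (δ j * m) * (starRingEnd ℂ) (om N ^ (δ' j * m)))]
  have : ∀ j ∈ Finset.univ, (∑ m ∈ Finset.range N,
      om N ^ (δ j * m) * (starRingEnd ℂ) (om N ^ (δ' j * m)))
      = if δ j = δ' j then (N:ℂ) else 0 :=
    fun j _ => orth1 hN (hδ j) (hδ' j)
  rw [Finset.prod_congr rfl this]
  by_cases h : δ = δ'
  · subst h; simp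
  · obtain ⟨j, hj⟩ : ∃ j, δ j ≠ δ' j := by
      by_contra hc; push_neg at hc; exact h (funext hc)
    rw [Finset.prod_eq_zero (Finset.mem_univ j) (by rw [if_neg hj]), if_neg h]

variable {H : Type*} [NormedAddCommGroup H] [InnerProductSpace ℂ H]

local notation "⟪" x ", " y "⟫" => @inner ℂ _ _ x y

lemma parseval {N : ℕ} (hN : 0 < N) (F : Finset (Fin d → ℕ))
    (hF : ∀ δ ∈ F, ∀ j, δ j < N) (u : (Fin d → ℕ) → H) :
    ∑ k ∈ kIdx N d, ‖∑ δ ∈ F, ch N k δ • u δ‖ ^ 2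
      = (N : ℝ) ^ d * ∑ δ ∈ F, ‖u δ‖ ^ 2 := by
  have key : (∑ k ∈ kIdx N d, ⟪∑ δ ∈ F, ch N k δ • u δ, ∑ δ ∈ F, ch N k δ • u δ⟫)
      = ((N : ℂ)) ^ d * ∑ δ ∈ F, ⟪u δ, u δ⟫ := by
    have h1 : ∀ k, ⟪∑ δ ∈ F, ch N k δ • u δ, ∑ δ ∈ F, ch N k δ • u δ⟫
        = ∑ δ ∈ F, ∑ δ' ∈ F,
            (starRingEnd ℂ) (ch N k δ) * ch N k δ' * ⟪u δ, u δ'⟫ := by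
      intro k
      rw [sum_inner]
      refine Finset.sum_congr rfl fun δ _ => ?_
      rw [inner_sum]
      refine Finset.sum_congr rfl fun δ' _ => ?_
      rw [inner_smul_left, inner_smul_right]
      ring
    simp_rw [h1]
    rw [Finset.sum_comm]
    have h2 : ∀ δ ∈ F, ∑ k ∈ kIdx N d, ∑ δ' ∈ F,
        (starRingEnd ℂ) (ch N k δ) * ch N k δ' * ⟪u δ, u δ'⟫
        = (N:ℂ)^d * ⟪u δ, u δ⟫ := by
      intro δ hδ
      rw [Finset.sum_comm]
      have h3 : ∀ δ' ∈ F, ∑ k ∈ kIdx N d,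
          (starRingEnd ℂ) (ch N k δ) * ch N k δ' * ⟪u δ, u δ'⟫
          = if δ' = δ then (N:ℂ)^d * ⟪u δ, u δ'⟫ else 0 := by
        intro δ' hδ'
        rw [← Finset.sum_mul]
        have : ∀ k ∈ kIdx N d, (starRingEnd ℂ) (ch N k δ) * ch N k δ'
            = ch N k δ' * (starRingEnd ℂ) (ch N k δ) := fun k _ => mul_comm _ _
        rw [Finset.sum_congr rfl this, orthd hN (hF δ' hδ') (hF δ hδ), ite_mul, zero_mul]
      rw [Finset.sum_congr rfl h3,
        Finset.sum_ite_eq' F δ (fun δ' => (N:ℂ)^d * ⟪u δ, u δ'⟫), if_pos hδ]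
    rw [Finset.sum_congr rfl h2, ← Finset.mul_sum]
  have reKey := congrArg Complex.re key
  rw [Complex.re_sum] at reKey
  have hL : ∀ k ∈ kIdx N d, (⟪∑ δ ∈ F, ch N k δ • u δ, ∑ δ ∈ F, ch N k δ • u δ⟫).re
      = ‖∑ δ ∈ F, ch N k δ • u δ‖ ^ 2 := fun k _ => by
    exact inner_self_eq_norm_sq (𝕜 := ℂ) _
  rw [Finset.sum_congr rfl hL] at reKey
  rw [reKey]
  have : ((N:ℂ))^d * ∑ δ ∈ F, ⟪u δ, u δ⟫ = (((N:ℝ)^d : ℝ) : ℂ) * ∑ δ ∈ F, ⟪u δ, u δ⟫ := by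
    push_cast; ring
  rw [this, Complex.re_ofReal_mul, Complex.re_sum,
    Finset.sum_congr rfl (fun δ _ => by exact inner_self_eq_norm_sq (𝕜 := ℂ) (u δ))]
lemma sub_add_cancel_pi {α γ : Fin d → ℕ} (h : α ≤ γ) : α + (γ - α) = γ := by
  funext i
  have := Pi.le_def.mp h i
  simp only [Pi.add_apply, Pi.sub_apply]
  omega

/-- Spectral form of convolution: the Fourier transform of a convolution is a product. -/
lemma conv_eq {N : ℕ} {ι : Type*} [DecidableEq ι] (S : Finset ι) (m : ι → (Fin d → ℕ))
    (a : ι → ℂ) (F T : Finset (Fin d → ℕ)) (hT : ∀ α ∈ S, ∀ δ ∈ F, m α + δ ∈ T)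
    (y : (Fin d → ℕ) → H) (hy : ∀ δ, δ ∉ F → y δ = 0) (k : Fin d → ℕ) :
    ∑ γ ∈ T, ch N k γ • (∑ α ∈ S, a α • (if m α ≤ γ then y (γ - m α) else 0))
      = (∑ α ∈ S, a α * ch N k (m α)) • (∑ δ ∈ F, ch N k δ • y δ) := by
  have inner_claim : ∀ α ∈ S,
      ∑ γ ∈ T, ch N k γ • (if m α ≤ γ then y (γ - m α) else 0)
        = ch N k (m α) • ∑ δ ∈ F, ch N k δ • y δ := by
    intro α _hα
    have hRHS : ch N k (m α) • ∑ δ ∈ F, ch N k δ • y δ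
        = ∑ δ ∈ F, ch N k (m α + δ) • y δ := by
      rw [Finset.smul_sum]
      refine Finset.sum_congr rfl fun δ _ => ?_
      rw [ch_add, smul_smul]
    rw [hRHS]
    have hsub : ∑ γ ∈ T, ch N k γ • (if m α ≤ γ then y (γ - m α) else 0)
        = ∑ γ ∈ T.filter (fun γ => m α ≤ γ ∧ γ - m α ∈ F),
            ch N k γ • (if m α ≤ γ then y (γ - m α) else 0) := by
      refine (Finset.sum_subset (Finset.filter_subset _ _) ?_).symm
      intro γ hγT hγ
      rw [Finset.mem_filter] at hγ
      push_neg at hγ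
      by_cases hle : m α ≤ γ
      · rw [if_pos hle, hy _ (hγ hγT hle), smul_zero]
      · rw [if_neg hle, smul_zero]
    rw [hsub]
    refine Finset.sum_nbij' (fun γ => γ - m α) (fun δ => m α + δ) ?_ ?_ ?_ ?_ ?_
    · intro γ hγ
      rw [Finset.mem_filter] at hγ
      exact hγ.2.2
    · intro δ hδ
      rw [Finset.mem_filter]
      refine ⟨hT α _hα δ hδ, le_self_add, ?_⟩
      have : m α + δ - m α = δ := by
        funext i; simp only [Pi.add_apply, Pi.sub_apply]; omega
      rw [this]; exact hδ
    · intro γ hγ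
      rw [Finset.mem_filter] at hγ
      exact sub_add_cancel_pi hγ.2.1
    · intro δ hδ
      funext i; simp only [Pi.add_apply, Pi.sub_apply]; omega
    · intro γ hγ
      rw [Finset.mem_filter] at hγ
      rw [if_pos hγ.2.1, sub_add_cancel_pi hγ.2.1]
  calc ∑ γ ∈ T, ch N k γ • (∑ α ∈ S, a α • (if m α ≤ γ then y (γ - m α) else 0))
      = ∑ α ∈ S, a α • ∑ γ ∈ T, ch N k γ • (if m α ≤ γ then y (γ - m α) else 0) := by
        simp_rw [Finset.smul_sum]
        rw [Finset.sum_comm]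
        refine Finset.sum_congr rfl fun α _ => ?_
        refine Finset.sum_congr rfl fun γ _ => ?_
        rw [smul_smul, smul_smul, mul_comm]
    _ = ∑ α ∈ S, (a α * ch N k (m α)) • ∑ δ ∈ F, ch N k δ • y δ := by
        refine Finset.sum_congr rfl fun α hα => ?_
        rw [inner_claim α hα, smul_smul]
    _ = (∑ α ∈ S, a α * ch N k (m α)) • (∑ δ ∈ F, ch N k δ • y δ) := by
        rw [Finset.sum_smul]

/-- The core convolution-norm inequality, proved by discrete Fourier analysis. -/
lemma core {ι : Type*} [DecidableEq ι] (S : Finset ι) (m : ι → (Fin d → ℕ)) (a : ι → ℂ)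
    (F : Finset (Fin d → ℕ)) (y : (Fin d → ℕ) → H) (hy : ∀ δ, δ ∉ F → y δ = 0)
    (M : ℝ) (hM0 : 0 ≤ M)
    (hM : ∀ w : Fin d → ℂ, (∀ j, ‖w j‖ = 1) → ‖∑ α ∈ S, a α * ∏ j, w j ^ (m α j)‖ ≤ M) :
    ∑ γ ∈ S.image m + F, ‖∑ α ∈ S, a α • (if m α ≤ γ then y (γ - m α) else 0)‖ ^ 2
      ≤ M ^ 2 * ∑ δ ∈ F, ‖y δ‖ ^ 2 := by
  classical
  set T := S.image m + F with hTdef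
  set c : (Fin d → ℕ) → H := fun γ => ∑ α ∈ S, a α • (if m α ≤ γ then y (γ - m α) else 0)
    with hcdef
  set N := 1 + (T ∪ F).sup (fun γ => Finset.univ.sup γ) with hNdef
  have hN : 0 < N := by omega
  have hbound : ∀ γ ∈ T ∪ F, ∀ j, γ j < N := by
    intro γ hγ j
    have h1 : γ j ≤ Finset.univ.sup γ := Finset.le_sup (Finset.mem_univ j)
    have h2 : Finset.univ.sup γ ≤ (T ∪ F).sup (fun γ => Finset.univ.sup γ) :=
      Finset.le_sup (f := fun γ => Finset.univ.sup γ) hγ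
    omega
  have hTb : ∀ γ ∈ T, ∀ j, γ j < N := fun γ hγ => hbound γ (Finset.mem_union_left _ hγ)
  have hFb : ∀ δ ∈ F, ∀ j, δ j < N := fun δ hδ => hbound δ (Finset.mem_union_right _ hδ)
  have hP1 := parseval hN T hTb c
  have hP2 := parseval (H := H) hN F hFb y
  have hconv : ∀ k ∈ kIdx N d,
      ‖∑ γ ∈ T, ch N k γ • c γ‖ ^ 2 ≤ M ^ 2 * ‖∑ δ ∈ F, ch N k δ • y δ‖ ^ 2 := by
    intro k _
    rw [hcdef]
    rw [conv_eq S m a F T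
      (fun α hα δ hδ => Finset.add_mem_add (Finset.mem_image_of_mem m hα) hδ) y hy k]
    rw [norm_smul, mul_pow]
    have hq : ‖∑ α ∈ S, a α * ch N k (m α)‖ ≤ M := by
      have hw := hM (fun j => om N ^ k j) (fun j => by rw [norm_pow, norm_om, one_pow])
      have hrw : ∀ α ∈ S, a α * ∏ j, (om N ^ k j) ^ (m α j) = a α * ch N k (m α) := by
        intro α _
        congr 1
        rw [ch]
        refine Finset.prod_congr rfl fun j _ => ?_
        rw [← pow_mul, mul_comm]
      rwa [Finset.sum_congr rfl hrw] at hw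
    have hq2 : ‖∑ α ∈ S, a α * ch N k (m α)‖ ^ 2 ≤ M ^ 2 :=
      pow_le_pow_left₀ (norm_nonneg _) hq 2
    exact mul_le_mul_of_nonneg_right hq2 (by positivity)
  have hchain : (N : ℝ) ^ d * ∑ γ ∈ T, ‖c γ‖ ^ 2
      ≤ M ^ 2 * ((N : ℝ) ^ d * ∑ δ ∈ F, ‖y δ‖ ^ 2) := by
    calc (N : ℝ) ^ d * ∑ γ ∈ T, ‖c γ‖ ^ 2
        = ∑ k ∈ kIdx N d, ‖∑ γ ∈ T, ch N k γ • c γ‖ ^ 2 := hP1.symm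
      _ ≤ ∑ k ∈ kIdx N d, M ^ 2 * ‖∑ δ ∈ F, ch N k δ • y δ‖ ^ 2 :=
          Finset.sum_le_sum hconv
      _ = M ^ 2 * ∑ k ∈ kIdx N d, ‖∑ δ ∈ F, ch N k δ • y δ‖ ^ 2 := by
          rw [Finset.mul_sum]
      _ = M ^ 2 * ((N : ℝ) ^ d * ∑ δ ∈ F, ‖y δ‖ ^ 2) := by rw [hP2]
  have hNd : (0 : ℝ) < (N : ℝ) ^ d := by positivity
  have := (mul_le_mul_iff_right₀ hNd).mp (by linarith [hchain] : (N:ℝ)^d * ∑ γ ∈ T, ‖c γ‖^2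
    ≤ (N:ℝ)^d * (M^2 * ∑ δ ∈ F, ‖y δ‖^2))
  exact this


section Operators
variable [CompleteSpace H] (A : Fin d → (Fin d → ℕ) → (H →L[ℂ] H))

/-- Fuel-based recursion building the product of weights along a path from `0` to `γ`. -/
noncomputable def pathAux : ℕ → (Fin d → ℕ) → (H →L[ℂ] H)
  | 0, _ => 1
  | n+1, γ =>
    if h : ∃ j, γ j ≠ 0 then
      (A h.choose (γ - unitIdx h.choose)).comp (pathAux n (γ - unitIdx h.choose))
    else 1

/-- The path unitary `P_γ`. -/
noncomputable def pathP (γ : Fin d → ℕ) : H →L[ℂ] H := pathAux A (∑ j, γ j) γ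

lemma deg_sub {γ : Fin d → ℕ} {j : Fin d} (hj : γ j ≠ 0) :
    (∑ i, (γ - unitIdx j) i) + 1 = ∑ i, γ i := by
  have hle : ∀ i ∈ Finset.univ, unitIdx j i ≤ γ i := by
    intro i _
    simp only [unitIdx]
    split_ifs with h
    · subst h; omega
    · omega
  have h1 : ∑ i, (γ - unitIdx j) i = (∑ i, γ i) - ∑ i, unitIdx j i := by
    have := Finset.sum_tsub_distrib (f := γ) (g := unitIdx j) Finset.univ hle
    exact this
  have h2 : ∑ i, unitIdx j i = 1 := by simp [unitIdx]
  have h3 : 1 ≤ ∑ i, γ i := le_trans (by omega : 1 ≤ γ j)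
    (Finset.single_le_sum (fun i _ => Nat.zero_le _) (Finset.mem_univ j))
  omega

lemma sub_unit_add {X : Fin d → ℕ} {j : Fin d} (h : X j ≠ 0) :
    X - unitIdx j + unitIdx j = X := by
  funext i
  simp only [Pi.add_apply, Pi.sub_apply, unitIdx]
  by_cases hi : i = j
  · subst hi; rw [if_pos rfl]; omega
  · simp [hi]

lemma sub_unit_comm (γ : Fin d → ℕ) (a b : Fin d) :
    γ - unitIdx a - unitIdx b = γ - unitIdx b - unitIdx a := by
  funext i
  simp only [Pi.sub_apply, unitIdx]
  split_ifs <;> omega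

lemma pathP_def {γ : Fin d → ℕ} (h : ∃ j, γ j ≠ 0) :
    pathP A γ = (A h.choose (γ - unitIdx h.choose)).comp (pathP A (γ - unitIdx h.choose)) := by
  obtain ⟨n, hn⟩ : ∃ n, ∑ j, γ j = n + 1 := by
    obtain ⟨j, hj⟩ := h
    have h1 : γ j ≤ ∑ i, γ i := Finset.single_le_sum (fun i _ => Nat.zero_le _) (Finset.mem_univ j)
    exact ⟨(∑ j, γ j) - 1, by omega⟩
  have hdeg : ∑ i, (γ - unitIdx h.choose) i = n := by
    have := deg_sub (γ := γ) h.choose_spec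
    omega
  rw [pathP, hn, pathAux, dif_pos h, pathP, hdeg]

lemma pathP_step
    (hAc : ∀ i j α, (A i (α + unitIdx j)).comp (A j α) = (A j (α + unitIdx i)).comp (A i α)) :
    ∀ (n : ℕ) (γ : Fin d → ℕ), (∑ i, γ i) = n → ∀ j, γ j ≠ 0 →
      pathP A γ = (A j (γ - unitIdx j)).comp (pathP A (γ - unitIdx j)) := by
  intro n
  induction n using Nat.strong_induction_on with
  | _ n IH =>
    intro γ hγ j hj
    have hex : ∃ j, γ j ≠ 0 := ⟨j, hj⟩
    set j₀ := hex.choose with hj₀def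
    have hj₀ : γ j₀ ≠ 0 := hex.choose_spec
    have hd := pathP_def A hex
    rw [← hj₀def] at hd
    by_cases hjj : j = j₀
    · rw [hd, hjj]
    · have hn1 : 1 ≤ n := by
        have h1 : γ j ≤ ∑ i, γ i := Finset.single_le_sum (fun i _ => Nat.zero_le _)
          (Finset.mem_univ j)
        omega
      have hdeg₀ : ∑ i, (γ - unitIdx j₀) i = n - 1 := by
        have := deg_sub (γ := γ) hj₀; omega
      have hdegj : ∑ i, (γ - unitIdx j) i = n - 1 := by
        have := deg_sub (γ := γ) hj; omega
      have hcj : (γ - unitIdx j₀) j = γ j := by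
        simp only [Pi.sub_apply, unitIdx]
        rw [if_neg hjj]
        omega
      have hcj₀ : (γ - unitIdx j) j₀ = γ j₀ := by
        simp only [Pi.sub_apply, unitIdx]
        rw [if_neg (Ne.symm hjj)]
        omega
      have hsub1 : γ - unitIdx j₀ - unitIdx j + unitIdx j = γ - unitIdx j₀ :=
        sub_unit_add (by rw [hcj]; exact hj)
      have hδeq : γ - unitIdx j - unitIdx j₀ = γ - unitIdx j₀ - unitIdx j :=
        sub_unit_comm γ j j₀
      have h5 : γ - unitIdx j₀ - unitIdx j + unitIdx j₀ = γ - unitIdx j := by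
        rw [← hδeq]
        exact sub_unit_add (by rw [hcj₀]; exact hj₀)
      have e1 : pathP A (γ - unitIdx j₀)
          = (A j ((γ - unitIdx j₀) - unitIdx j)).comp (pathP A ((γ - unitIdx j₀) - unitIdx j)) :=
        IH (n-1) (by omega) _ hdeg₀ j (by rw [hcj]; exact hj)
      have e2 : pathP A (γ - unitIdx j)
          = (A j₀ ((γ - unitIdx j) - unitIdx j₀)).comp (pathP A ((γ - unitIdx j) - unitIdx j₀)) :=
        IH (n-1) (by omega) _ hdegj j₀ (by rw [hcj₀]; exact hj₀)
      have hAcc := hAc j₀ j (γ - unitIdx j₀ - unitIdx j)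
      rw [hsub1, h5] at hAcc
      rw [hd, e1, e2, hδeq, ← ContinuousLinearMap.comp_assoc, ← ContinuousLinearMap.comp_assoc,
        hAcc]

lemma pathP_unitary (hAu : ∀ j α, A j α ∈ unitary (H →L[ℂ] H)) :
    ∀ (n : ℕ) (γ : Fin d → ℕ), (∑ i, γ i) = n → pathP A γ ∈ unitary (H →L[ℂ] H) := by
  intro n
  induction n using Nat.strong_induction_on with
  | _ n IH =>
    intro γ hγ
    by_cases hex : ∃ j, γ j ≠ 0
    · rw [pathP_def A hex]
      have hj₀ : γ hex.choose ≠ 0 := hex.choose_spec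
      have hn1 : 1 ≤ n := by
        have h1 : γ hex.choose ≤ ∑ i, γ i := Finset.single_le_sum (fun i _ => Nat.zero_le _)
          (Finset.mem_univ hex.choose)
        omega
      have hdeg : ∑ i, (γ - unitIdx hex.choose) i = n - 1 := by
        have := deg_sub (γ := γ) hj₀; omega
      have h2 := IH (n-1) (by omega) _ hdeg
      rw [show (A hex.choose (γ - unitIdx hex.choose)).comp (pathP A (γ - unitIdx hex.choose))
        = A hex.choose (γ - unitIdx hex.choose) * pathP A (γ - unitIdx hex.choose) from rfl]
      exact mul_mem (hAu _ _) h2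
    · push_neg at hex
      have h0 : ∑ i, γ i = 0 := Finset.sum_eq_zero fun i _ => hex i
      rw [pathP, h0, pathAux]
      exact one_mem _

/-- `pathP` at `γ` for any `γ`, unitary. -/
noncomputable def upathP (γ : Fin d → ℕ) : H →L[ℂ] H := pathP A γ

lemma pathP_mem (hAu : ∀ j α, A j α ∈ unitary (H →L[ℂ] H)) (γ : Fin d → ℕ) :
    pathP A γ ∈ unitary (H →L[ℂ] H) :=
  pathP_unitary A hAu _ γ rfl

lemma pathP_step' (hAc : ∀ i j α, (A i (α + unitIdx j)).comp (A j α)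
      = (A j (α + unitIdx i)).comp (A i α)) {γ : Fin d → ℕ} {j : Fin d} (hj : γ j ≠ 0) :
    pathP A γ = (A j (γ - unitIdx j)).comp (pathP A (γ - unitIdx j)) :=
  pathP_step A hAc _ γ rfl j hj

variable {A}

lemma unit_star_apply_apply {u : H →L[ℂ] H} (hu : u ∈ unitary (H →L[ℂ] H)) (v : H) :
    (star u) (u v) = v := by
  have h := Unitary.star_mul_self_of_mem hu
  calc (star u) (u v) = (star u * u) v := rfl
    _ = v := by rw [h]; rfl

lemma unit_apply_star_apply {u : H →L[ℂ] H} (hu : u ∈ unitary (H →L[ℂ] H)) (v : H) :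
    u ((star u) v) = v := by
  have h := Unitary.mul_star_self_of_mem hu
  calc u ((star u) v) = (u * star u) v := rfl
    _ = v := by rw [h]; rfl

lemma unit_norm_le {u : H →L[ℂ] H} (hu : u ∈ unitary (H →L[ℂ] H)) : ‖u‖ ≤ 1 := by
  have h := Unitary.star_mul_self_of_mem hu
  have h1 : ‖u‖ * ‖u‖ = ‖(1 : H →L[ℂ] H)‖ := by
    rw [← CStarRing.norm_star_mul_self, h]
  have h2 : ‖(1 : H →L[ℂ] H)‖ ≤ 1 := ContinuousLinearMap.norm_id_le
  nlinarith [norm_nonneg u]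

lemma unit_norm_apply {u : H →L[ℂ] H} (hu : u ∈ unitary (H →L[ℂ] H)) (v : H) :
    ‖u v‖ = ‖v‖ := by
  refine le_antisymm ?_ ?_
  · calc ‖u v‖ ≤ ‖u‖ * ‖v‖ := u.le_opNorm v
      _ ≤ 1 * ‖v‖ := by
        have := unit_norm_le hu
        exact mul_le_mul_of_nonneg_right this (norm_nonneg v)
      _ = ‖v‖ := one_mul _
  · calc ‖v‖ = ‖(star u) (u v)‖ := by rw [unit_star_apply_apply hu]
      _ ≤ ‖star u‖ * ‖u v‖ := (star u).le_opNorm (u v)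
      _ ≤ 1 * ‖u v‖ := by
        have := unit_norm_le (Unitary.star_mem hu)
        exact mul_le_mul_of_nonneg_right this (norm_nonneg _)
      _ = ‖u v‖ := one_mul _

variable (A)

/-- `B` acts as the shift by `β` twisted by the path unitaries. -/
def IsShifted (B : lp (fun _ : Fin d → ℕ => H) 2 →L[ℂ] lp (fun _ : Fin d → ℕ => H) 2)
    (β : Fin d → ℕ) : Prop :=
  ∀ (x : lp (fun _ : Fin d → ℕ => H) 2) (γ : Fin d → ℕ),
    (B x) γ = if β ≤ γ then pathP A γ ((star (pathP A (γ - β))) (x (γ - β))) else 0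

variable {A}

lemma isShifted_one (hAu : ∀ j α, A j α ∈ unitary (H →L[ℂ] H)) :
    IsShifted A (1 : lp (fun _ : Fin d → ℕ => H) 2 →L[ℂ] lp (fun _ : Fin d → ℕ => H) 2) 0 := by
  intro x γ
  rw [ContinuousLinearMap.one_apply, if_pos (by intro i; exact Nat.zero_le _), tsub_zero,
    unit_apply_star_apply (pathP_mem A hAu γ)]

lemma isShifted_mul (hAu : ∀ j α, A j α ∈ unitary (H →L[ℂ] H))
    {B C : lp (fun _ : Fin d → ℕ => H) 2 →L[ℂ] lp (fun _ : Fin d → ℕ => H) 2}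
    {βB βC : Fin d → ℕ} (hB : IsShifted A B βB) (hC : IsShifted A C βC) :
    IsShifted A (B * C) (βB + βC) := by
  intro x γ
  rw [ContinuousLinearMap.mul_apply, hB (C x) γ]
  by_cases h1 : βB ≤ γ
  · rw [if_pos h1, hC x (γ - βB)]
    by_cases h2 : βC ≤ γ - βB
    · have h3 : βB + βC ≤ γ := by
        refine Pi.le_def.mpr fun i => ?_
        have e1 := Pi.le_def.mp h1 i
        have e2 := Pi.le_def.mp h2 i
        simp only [Pi.sub_apply] at e2
        simp only [Pi.add_apply]
        omega
      have h4 : γ - βB - βC = γ - (βB + βC) := by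
        funext i
        simp only [Pi.sub_apply, Pi.add_apply]
        omega
      rw [if_pos h2, if_pos h3, unit_star_apply_apply (pathP_mem A hAu (γ - βB)), h4]
    · have h3 : ¬ (βB + βC ≤ γ) := by
        intro hc
        apply h2
        refine Pi.le_def.mpr fun i => ?_
        have e1 := Pi.le_def.mp hc i
        have e2 := Pi.le_def.mp h1 i
        simp only [Pi.add_apply] at e1
        simp only [Pi.sub_apply]
        omega
      rw [if_neg h2, if_neg h3, map_zero, map_zero]
  · have h3 : ¬ (βB + βC ≤ γ) := by
      intro hc
      apply h1
      refine Pi.le_def.mpr fun i => ?_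
      have e1 := Pi.le_def.mp hc i
      simp only [Pi.add_apply] at e1
      omega
    rw [if_neg h1, if_neg h3]

lemma unitIdx_le_iff {γ : Fin d → ℕ} {j : Fin d} : unitIdx j ≤ γ ↔ γ j ≠ 0 := by
  constructor
  · intro h
    have h2 : (1:ℕ) ≤ γ j := by simpa [unitIdx] using Pi.le_def.mp h j
    omega
  · intro h
    refine Pi.le_def.mpr fun i => ?_
    simp only [unitIdx]
    split_ifs with hi
    · subst hi; omega
    · omega

lemma isShifted_T (hAu : ∀ j α, A j α ∈ unitary (H →L[ℂ] H))
    (hAc : ∀ i j α, (A i (α + unitIdx j)).comp (A j α) = (A j (α + unitIdx i)).comp (A i α))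
    (T : Fin d → (lp (fun _ : Fin d → ℕ => H) 2 →L[ℂ] lp (fun _ : Fin d → ℕ => H) 2))
    (hT : ∀ j x, (∀ α, (T j x) (α + unitIdx j) = A j α (x α)) ∧
        (∀ α, α j = 0 → (T j x) α = 0)) (j : Fin d) :
    IsShifted A (T j) (unitIdx j) := by
  intro x γ
  by_cases h : unitIdx j ≤ γ
  · have hγj : γ j ≠ 0 := unitIdx_le_iff.mp h
    have h2 : (γ - unitIdx j) + unitIdx j = γ := sub_unit_add hγj
    have h3 := (hT j x).1 (γ - unitIdx j)
    rw [h2] at h3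
    rw [h3, if_pos h, pathP_step' A hAc hγj, ContinuousLinearMap.comp_apply,
      unit_apply_star_apply (pathP_mem A hAu (γ - unitIdx j))]
  · have hγj : γ j = 0 := by
      by_contra hc
      exact h (unitIdx_le_iff.mpr hc)
    rw [(hT j x).2 γ hγj, if_neg h]

lemma isShifted_pow (hAu : ∀ j α, A j α ∈ unitary (H →L[ℂ] H))
    {B : lp (fun _ : Fin d → ℕ => H) 2 →L[ℂ] lp (fun _ : Fin d → ℕ => H) 2}
    {β : Fin d → ℕ} (hB : IsShifted A B β) (n : ℕ) : IsShifted A (B ^ n) (n • β) := by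
  induction n with
  | zero => rw [pow_zero, zero_smul]; exact isShifted_one hAu
  | succ n ih =>
    rw [pow_succ, succ_nsmul]
    exact isShifted_mul hAu ih hB

lemma isShifted_ofFnProd (hAu : ∀ j α, A j α ∈ unitary (H →L[ℂ] H)) :
    ∀ (mm : ℕ) (g : Fin mm → (lp (fun _ : Fin d → ℕ => H) 2 →L[ℂ] lp (fun _ : Fin d → ℕ => H) 2))
      (β : Fin mm → Fin d → ℕ), (∀ j, IsShifted A (g j) (β j)) →
      IsShifted A (List.ofFn g).prod (∑ j, β j) := by
  intro mm
  induction mm with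
  | zero =>
    intro g β _
    rw [List.ofFn_zero, List.prod_nil]
    have h0 : (∑ j : Fin 0, β j) = 0 := by simp
    rw [h0]
    exact isShifted_one hAu
  | succ m ih =>
    intro g β hg
    rw [List.ofFn_succ, List.prod_cons, Fin.sum_univ_succ]
    exact isShifted_mul hAu (hg 0) (ih _ _ (fun j => hg j.succ))

lemma sum_smul_unitIdx (α : Fin d →₀ ℕ) :
    (∑ j, (α j) • unitIdx j) = ⇑α := by
  funext i
  rw [Finset.sum_apply]
  have h1 : ∀ j, ((α j) • unitIdx j) i = if i = j then α j else 0 := by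
    intro j
    simp only [Pi.smul_apply, unitIdx, smul_eq_mul]
    split_ifs <;> omega
  rw [Finset.sum_congr rfl (fun j _ => h1 j), Finset.sum_ite_eq Finset.univ i (fun j => α j),
    if_pos (Finset.mem_univ i)]

lemma isShifted_tuplePow (hAu : ∀ j α, A j α ∈ unitary (H →L[ℂ] H))
    (hAc : ∀ i j α, (A i (α + unitIdx j)).comp (A j α) = (A j (α + unitIdx i)).comp (A i α))
    (T : Fin d → (lp (fun _ : Fin d → ℕ => H) 2 →L[ℂ] lp (fun _ : Fin d → ℕ => H) 2))
    (hT : ∀ j x, (∀ α, (T j x) (α + unitIdx j) = A j α (x α)) ∧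
        (∀ α, α j = 0 → (T j x) α = 0)) (α : Fin d →₀ ℕ) :
    IsShifted A (tuplePow T α) ⇑α := by
  have h := isShifted_ofFnProd hAu d (fun j => T j ^ α j) (fun j => (α j) • unitIdx j)
    (fun j => isShifted_pow hAu (isShifted_T hAu hAc T hT j) (α j))
  rw [sum_smul_unitIdx] at h
  rw [tuplePow]
  exact h

end Operators
section PolySup
variable {d : ℕ}

lemma polySup_bddAbove (p : MvPolynomial (Fin d) ℂ) :
    BddAbove (Set.range fun z : {z : Fin d → ℂ // ∀ i, ‖z i‖ < 1} =>
      ‖MvPolynomial.eval z.1 p‖) := by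
  refine ⟨∑ α ∈ p.support, ‖MvPolynomial.coeff α p‖, ?_⟩
  rintro r ⟨z, rfl⟩
  show ‖MvPolynomial.eval z.1 p‖ ≤ _
  rw [MvPolynomial.eval_eq']
  refine le_trans (norm_sum_le _ _) (Finset.sum_le_sum fun α _ => ?_)
  rw [norm_mul]
  have h1 : ‖∏ j, z.1 j ^ α j‖ ≤ 1 := by
    rw [norm_prod]
    refine Finset.prod_le_one (fun j _ => norm_nonneg _) (fun j _ => ?_)
    rw [norm_pow]
    exact pow_le_one₀ (norm_nonneg _) (le_of_lt (z.2 j))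
  calc ‖MvPolynomial.coeff α p‖ * ‖∏ j, z.1 j ^ α j‖
      ≤ ‖MvPolynomial.coeff α p‖ * 1 :=
        mul_le_mul_of_nonneg_left h1 (norm_nonneg _)
    _ = ‖MvPolynomial.coeff α p‖ := mul_one _

lemma le_polySup (p : MvPolynomial (Fin d) ℂ) {z : Fin d → ℂ} (hz : ∀ i, ‖z i‖ < 1) :
    ‖MvPolynomial.eval z p‖ ≤ polySup p :=
  le_ciSup (polySup_bddAbove p) (⟨z, hz⟩ : {z : Fin d → ℂ // ∀ i, ‖z i‖ < 1})

lemma polySup_nonneg (p : MvPolynomial (Fin d) ℂ) : 0 ≤ polySup p :=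
  le_trans (norm_nonneg _) (le_polySup p (z := fun _ => 0) (fun i => by simp))

lemma torus_le_polySup (p : MvPolynomial (Fin d) ℂ) {w : Fin d → ℂ} (hw : ∀ i, ‖w i‖ = 1) :
    ‖MvPolynomial.eval w p‖ ≤ polySup p := by
  have hcont : Continuous fun r : ℝ => ‖MvPolynomial.eval (fun i => (r:ℂ) * w i) p‖ :=
    ((MvPolynomial.continuous_eval (p := p)).comp
      (continuous_pi fun i => Complex.continuous_ofReal.mul continuous_const)).norm
  have htend : Filter.Tendsto (fun r : ℝ => ‖MvPolynomial.eval (fun i => (r:ℂ) * w i) p‖)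
      (nhdsWithin 1 (Set.Iio 1)) (nhds ‖MvPolynomial.eval w p‖) := by
    have h1 : Filter.Tendsto (fun r : ℝ => ‖MvPolynomial.eval (fun i => (r:ℂ) * w i) p‖)
        (nhdsWithin 1 (Set.Iio 1)) (nhds ‖MvPolynomial.eval (fun i => ((1:ℝ):ℂ) * w i) p‖) :=
      (hcont.tendsto 1).mono_left nhdsWithin_le_nhds
    simpa using h1
  refine le_of_tendsto htend ?_
  have hmem : Set.Ioo (0:ℝ) 1 ∈ nhdsWithin (1:ℝ) (Set.Iio 1) :=
    Ioo_mem_nhdsLT_of_mem (by constructor <;> norm_num)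
  refine Filter.eventually_of_mem hmem fun r hr => ?_
  refine le_polySup p fun i => ?_
  rw [norm_mul, hw i, mul_one, Complex.norm_real, Real.norm_eq_abs, abs_of_pos hr.1]
  exact hr.2
end PolySup

section Main
variable {d : ℕ} {H : Type*} [NormedAddCommGroup H] [InnerProductSpace ℂ H] [CompleteSpace H]
  {A : Fin d → (Fin d → ℕ) → (H →L[ℂ] H)}

lemma polyEval_apply_coords (hAu : ∀ j α, A j α ∈ unitary (H →L[ℂ] H))
    (hAc : ∀ i j α, (A i (α + unitIdx j)).comp (A j α) = (A j (α + unitIdx i)).comp (A i α))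
    (T : Fin d → (lp (fun _ : Fin d → ℕ => H) 2 →L[ℂ] lp (fun _ : Fin d → ℕ => H) 2))
    (hT : ∀ j x, (∀ α, (T j x) (α + unitIdx j) = A j α (x α)) ∧
        (∀ α, α j = 0 → (T j x) α = 0))
    (p : MvPolynomial (Fin d) ℂ) (x : lp (fun _ : Fin d → ℕ => H) 2) (γ : Fin d → ℕ) :
    (polyEval T p x) γ = pathP A γ (∑ α ∈ p.support, MvPolynomial.coeff α p •
      (if (⇑α : Fin d → ℕ) ≤ γ then (star (pathP A (γ - ⇑α))) (x (γ - ⇑α)) else 0)) := by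
  have h0 : polyEval T p = ∑ α ∈ p.support, MvPolynomial.coeff α p • tuplePow T α := rfl
  rw [h0, ContinuousLinearMap.sum_apply, lp.coeFn_sum, Finset.sum_apply, map_sum]
  refine Finset.sum_congr rfl fun α hα => ?_
  rw [ContinuousLinearMap.smul_apply, lp.coeFn_smul, Pi.smul_apply,
    isShifted_tuplePow hAu hAc T hT α x γ, map_smul]
  congr 1
  by_cases h : (⇑α : Fin d → ℕ) ≤ γ
  · rw [if_pos h, if_pos h]
  · rw [if_neg h, if_neg h, map_zero]

lemma key_bound (hAu : ∀ j α, A j α ∈ unitary (H →L[ℂ] H))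
    (hAc : ∀ i j α, (A i (α + unitIdx j)).comp (A j α) = (A j (α + unitIdx i)).comp (A i α))
    (T : Fin d → (lp (fun _ : Fin d → ℕ => H) 2 →L[ℂ] lp (fun _ : Fin d → ℕ => H) 2))
    (hT : ∀ j x, (∀ α, (T j x) (α + unitIdx j) = A j α (x α)) ∧
        (∀ α, α j = 0 → (T j x) α = 0))
    (p : MvPolynomial (Fin d) ℂ) (F : Finset (Fin d → ℕ))
    (x : lp (fun _ : Fin d → ℕ => H) 2) (hx : ∀ γ, γ ∉ F → x γ = 0) :
    ‖polyEval T p x‖ ≤ polySup p * ‖x‖ := by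
  classical
  set y : (Fin d → ℕ) → H := fun δ => (star (pathP A δ)) (x δ) with hy
  have hy0 : ∀ δ, δ ∉ F → y δ = 0 := fun δ hδ => by rw [hy]; simp only; rw [hx δ hδ, map_zero]
  set c : (Fin d → ℕ) → H := fun γ => ∑ α ∈ p.support, MvPolynomial.coeff α p •
    (if (⇑α : Fin d → ℕ) ≤ γ then y (γ - ⇑α) else 0) with hc
  have hcoord : ∀ γ, (polyEval T p x) γ = pathP A γ (c γ) := fun γ =>
    polyEval_apply_coords hAu hAc T hT p x γ
  have hnorm : ∀ γ, ‖(polyEval T p x) γ‖ = ‖c γ‖ := fun γ => by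
    rw [hcoord γ, unit_norm_apply (pathP_mem A hAu γ)]
  set Tset := p.support.image (fun α : Fin d →₀ ℕ => (α : Fin d → ℕ)) + F with hTset
  have hczero : ∀ γ, γ ∉ Tset → c γ = 0 := by
    intro γ hγ
    rw [hc]
    refine Finset.sum_eq_zero fun α hα => ?_
    by_cases hle : (⇑α : Fin d → ℕ) ≤ γ
    · by_cases hyF : γ - ⇑α ∈ F
      · exfalso
        apply hγ
        rw [hTset]
        have h5 := Finset.add_mem_add (Finset.mem_image_of_mem (fun α : Fin d →₀ ℕ => (α : Fin d → ℕ)) hα) hyF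
        rwa [sub_add_cancel_pi hle] at h5
      · rw [if_pos hle, hy0 _ hyF, smul_zero]
    · rw [if_neg hle, smul_zero]
  have hrpow : ∀ r : ℝ, 0 ≤ r → r ^ ((2:ENNReal)).toReal = r ^ (2:ℕ) := fun r hr => by
    rw [show ((2:ENNReal)).toReal = ((2:ℕ):ℝ) by norm_num, Real.rpow_natCast]
  have hsq : ‖polyEval T p x‖ ^ (2:ℕ) = ∑ γ ∈ Tset, ‖c γ‖ ^ (2:ℕ) := by
    have h1 := lp.norm_rpow_eq_tsum (p := 2) (by norm_num) (polyEval T p x)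
    rw [hrpow _ (norm_nonneg _)] at h1
    have h2 : ∀ γ, ‖(polyEval T p x) γ‖ ^ ((2:ENNReal)).toReal = ‖c γ‖ ^ (2:ℕ) := fun γ => by
      rw [hrpow _ (norm_nonneg _), hnorm γ]
    rw [h1, tsum_congr h2]
    refine tsum_eq_sum fun γ hγ => ?_
    rw [hczero γ hγ]
    simp
  have hx2 : ‖x‖ ^ (2:ℕ) = ∑ δ ∈ F, ‖y δ‖ ^ (2:ℕ) := by
    have h1 := lp.norm_rpow_eq_tsum (p := 2) (by norm_num) x
    rw [hrpow _ (norm_nonneg _)] at h1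
    have h2 : ∀ δ, ‖x δ‖ ^ ((2:ENNReal)).toReal = ‖y δ‖ ^ (2:ℕ) := fun δ => by
      rw [hrpow _ (norm_nonneg _), hy]
      simp only
      rw [unit_norm_apply (Unitary.star_mem (pathP_mem A hAu δ))]
    rw [h1, tsum_congr h2]
    refine tsum_eq_sum fun δ hδ => ?_
    rw [hy0 δ hδ]
    simp
  have hMw : ∀ w : Fin d → ℂ, (∀ j, ‖w j‖ = 1) →
      ‖∑ α ∈ p.support, MvPolynomial.coeff α p * ∏ j, w j ^ (α j)‖ ≤ polySup p := by
    intro w hw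
    rw [← MvPolynomial.eval_eq']
    exact torus_le_polySup p hw
  have hcore := core p.support (fun α : Fin d →₀ ℕ => (α : Fin d → ℕ))
    (fun α => MvPolynomial.coeff α p) F y hy0 (polySup p) (polySup_nonneg p) hMw
  have hfin : ‖polyEval T p x‖ ^ (2:ℕ) ≤ (polySup p * ‖x‖) ^ (2:ℕ) := by
    rw [hsq, mul_pow, hx2]
    exact hcore
  nlinarith [hfin, norm_nonneg (polyEval T p x),
    mul_nonneg (polySup_nonneg p) (norm_nonneg x)]

end Main

end VNmulti


open VNmulti in
/-- A commuting contractive operator-valued multishift on `ℓ²_H(ℕ^d)` whose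
operator weights are all unitary satisfies von Neumann's inequality. -/
theorem multishift_unitary_weights_vN {d : ℕ} (H : Type*)
    [NormedAddCommGroup H] [InnerProductSpace ℂ H] [CompleteSpace H]
    (A : Fin d → (Fin d → ℕ) → (H →L[ℂ] H))
    (hAu : ∀ j α, A j α ∈ unitary (H →L[ℂ] H))
    (hAc : ∀ i j α, (A i (α + unitIdx j)).comp (A j α) = (A j (α + unitIdx i)).comp (A i α))
    (T : Fin d → (lp (fun _ : Fin d → ℕ => H) 2 →L[ℂ] lp (fun _ : Fin d → ℕ => H) 2))
    (hT : ∀ j x, (∀ α, (T j x) (α + unitIdx j) = A j α (x α)) ∧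
        (∀ α, α j = 0 → (T j x) α = 0))
    (hcontr : ∀ j, ‖T j‖ ≤ 1) :
    ∀ p : MvPolynomial (Fin d) ℂ, ‖polyEval T p‖ ≤ polySup p := by
  intro p
  refine ContinuousLinearMap.opNorm_le_bound _ (polySup_nonneg p) ?_
  intro x
  have hsum' : HasSum (fun γ : Fin d → ℕ => lp.single 2 γ (x γ)) x :=
    lp.hasSum_single (by norm_num) x
  have hsum : Filter.Tendsto (fun F : Finset (Fin d → ℕ) => ∑ γ ∈ F, lp.single 2 γ (x γ))
      Filter.atTop (nhds x) := hsum'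
  have hxscoord : ∀ (F : Finset (Fin d → ℕ)) γ, γ ∉ F →
      ((∑ γ ∈ F, lp.single 2 γ (x γ)) : lp (fun _ : Fin d → ℕ => H) 2) γ = 0 := by
    intro F γ hγ
    rw [lp.coeFn_sum, Finset.sum_apply]
    refine Finset.sum_eq_zero fun δ hδ => ?_
    exact lp.single_apply_ne 2 δ _ (by rintro rfl; exact hγ hδ)
  have hb : ∀ F : Finset (Fin d → ℕ),
      ‖polyEval T p (∑ γ ∈ F, lp.single 2 γ (x γ))‖
        ≤ polySup p * ‖(∑ γ ∈ F, lp.single 2 γ (x γ) : lp (fun _ : Fin d → ℕ => H) 2)‖ :=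
    fun F => key_bound hAu hAc T hT p F _ (hxscoord F)
  have h1 : Filter.Tendsto
      (fun F : Finset (Fin d → ℕ) => ‖polyEval T p (∑ γ ∈ F, lp.single 2 γ (x γ))‖)
      Filter.atTop (nhds ‖polyEval T p x‖) :=
    (((polyEval T p).continuous.tendsto x).comp hsum).norm
  have h2 : Filter.Tendsto
      (fun F : Finset (Fin d → ℕ) =>
        polySup p * ‖(∑ γ ∈ F, lp.single 2 γ (x γ) : lp (fun _ : Fin d → ℕ => H) 2)‖)
      Filter.atTop (nhds (polySup p * ‖x‖)) :=
    hsum.norm.const_mul _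
  exact le_of_tendsto_of_tendsto' h1 h2 hb
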